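/- If T is a Hausdorff well-stratified tree with no uncountable branches, then the road space Road(T) is a branchwise-real tree order: every branch of Road(T) is order-isomorphic to a real interval and Road(T) is a meet-semilattice. -/

import Mathlib

/-- A partial order is rooted if it has a minimum element. -/
def IsRooted (X : Type*) [PartialOrder X] : Prop := ∃ r : X, ∀ x, r ≤ x

/-- The set of predecessors of every element is linearly ordered. -/
def DownLinear (X : Type*) [PartialOrder X] : Prop :=
  ∀ x y z : X, y ≤ x → z ≤ x → y ≤ z ∨ z ≤ y

/-- A well-stratified tree: a rooted partial order in which the set of
predecessors of every element is well-ordered. -/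
def IsWSTree (T : Type*) [PartialOrder T] : Prop :=
  IsRooted T ∧ DownLinear T ∧ ∀ x : T, (Set.Iio x).IsWF

/-- A branchwise-real tree order: a rooted partial order with linearly
ordered predecessor sets, in which every branch (maximal chain) is
order-isomorphic to a real interval, and any two elements have a meet. -/
def IsBRTO (X : Type*) [PartialOrder X] : Prop :=
  IsRooted X ∧ DownLinear X ∧
  (∀ B : Set X, IsMaxChain (· ≤ ·) B →
      ∃ I : Set ℝ, I.OrdConnected ∧ Nonempty (B ≃o I)) ∧
  (∀ x y : X, ∃ m : X, IsGLB {x, y} m)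

/-- A continuous grading: a strictly monotonic real-valued map restricting
to an order isomorphism `[x,y] → [ℓ x, ℓ y]` for all `x < y` (these intervals
are chains, so a strictly monotonic bijection between them is an order
isomorphism). -/
def IsContinuousGrading {X : Type*} [PartialOrder X] (ℓ : X → ℝ) : Prop :=
  StrictMono ℓ ∧ ∀ x y : X, x < y →
    Set.BijOn ℓ (Set.Icc x y) (Set.Icc (ℓ x) (ℓ y))

/-- An element has successor rank iff its set of strict predecessors has a
maximum, i.e. it has an immediate predecessor. -/
def SuccRank {T : Type*} [PartialOrder T] (x : T) : Prop :=
  ∃ y, y < x ∧ ∀ z, z < x → z ≤ y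

/-- The road space of a tree `T`: the suborder of the lexicographic product
`T ×ₗ (0,1]` consisting of the pairs `⟨x,t⟩` with `t = 1` or `x` of successor
rank. -/
abbrev Road (T : Type*) [PartialOrder T] : Type _ :=
  {p : T ×ₗ (Set.Ioc (0:ℝ) 1) // ((ofLex p).2 : ℝ) = 1 ∨ SuccRank (ofLex p).1}

section RoadAux
attribute [local instance] Classical.propDecidable

open Set

variable {T : Type*} [PartialOrder T]

/-- least element of a nonempty chain in a tree with well-founded predecessors -/
lemma road_exists_least (hwf : ∀ x : T, (Set.Iio x).IsWF)
    {S : Set T} (hchain : ∀ y ∈ S, ∀ z ∈ S, y ≤ z ∨ z ≤ y) (hne : S.Nonempty) :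
    ∃ m ∈ S, ∀ z ∈ S, m ≤ z := by
  obtain ⟨x, hx⟩ := hne
  by_cases h : (S ∩ Set.Iio x).Nonempty
  · have hswf : (S ∩ Set.Iio x).IsWF := (hwf x).mono (Set.inter_subset_right)
    refine ⟨hswf.min h, (hswf.min_mem h).1, ?_⟩
    intro z hz
    have hmS := hswf.min_mem h
    rcases hchain _ hmS.1 z hz with h1 | h1
    · exact h1
    · by_cases hzx : z < x
      · have := hswf.not_lt_min h (a := z) ⟨hz, hzx⟩
        rcases lt_or_eq_of_le h1 with h2 | h2
        · exact absurd h2 this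
        · exact h2 ▸ le_refl _
      · have hmx : hswf.min h < x := hmS.2
        exact absurd (lt_of_le_of_lt h1 hmx) hzx
  · refine ⟨x, hx, fun z hz => ?_⟩
    rcases hchain x hx z hz with h1 | h1
    · exact h1
    · rcases lt_or_eq_of_le h1 with h2 | h2
      · exact absurd ⟨hz, h2⟩ (fun hc => h ⟨z, hc⟩)
      · exact h2 ▸ le_refl _

noncomputable def roadPhi (e : ℕ → T) (x : T) : ℝ :=
  ∑' n, if e n < x then ((1:ℝ)/2)^(n+1) else 0

lemma roadPhi_term_nonneg (e : ℕ → T) (x : T) (n : ℕ) :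
    0 ≤ if e n < x then ((1:ℝ)/2)^(n+1) else 0 := by
  split <;> positivity

lemma roadPhi_summable (e : ℕ → T) (x : T) :
    Summable (fun n => if e n < x then ((1:ℝ)/2)^(n+1) else 0) := by
  refine Summable.of_nonneg_of_le (roadPhi_term_nonneg e x) (fun n => ?_) summable_geometric_two
  split
  · exact pow_le_pow_of_le_one (by norm_num) (by norm_num) (Nat.le_succ n)
  · positivity

lemma roadPhi_nonneg (e : ℕ → T) (x : T) : 0 ≤ roadPhi e x :=
  tsum_nonneg (roadPhi_term_nonneg e x)

lemma roadPhi_mono (e : ℕ → T) {x y : T} (h : x ≤ y) : roadPhi e x ≤ roadPhi e y := by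
  refine Summable.tsum_le_tsum (fun n => ?_) (roadPhi_summable e x) (roadPhi_summable e y)
  split
  · rw [if_pos (lt_of_lt_of_le (by assumption) h)]
  · exact roadPhi_term_nonneg e y n

lemma roadPhi_strict (e : ℕ → T) {x y : T} (h : x < y) {n₀ : ℕ} (he : e n₀ = x) :
    roadPhi e x < roadPhi e y := by
  refine Summable.tsum_lt_tsum_of_nonneg (roadPhi_term_nonneg e x) (fun n => ?_) (i := n₀) ?_
    (roadPhi_summable e y)
  · split
    · rw [if_pos (lt_trans (by assumption) h)]
    · exact roadPhi_term_nonneg e y n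
  · rw [if_neg (by rw [he]; exact lt_irrefl x), if_pos (by rw [he]; exact h)]
    positivity

lemma roadPhi_bot (e : ℕ → T) {x : T} (h : ∀ y, ¬ y < x) : roadPhi e x = 0 := by
  have : (fun n => if e n < x then ((1:ℝ)/2)^(n+1) else 0) = fun _ => (0:ℝ) := by
    funext n; rw [if_neg (h (e n))]
  rw [roadPhi, this, tsum_zero]

lemma roadPhi_limit (hdl : DownLinear T) (e : ℕ → T) {x : T} (hx : ¬ SuccRank x)
    {c : ℝ} (hc0 : 0 ≤ c) (hcx : c < roadPhi e x) :
    ∃ z, z < x ∧ c < roadPhi e z := by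
  have hs := roadPhi_summable e x
  obtain ⟨F, hF⟩ := (hs.hasSum.eventually (eventually_gt_nhds hcx)).exists
  rw [← Finset.sum_filter] at hF
  set F' := F.filter (fun n => e n < x) with hF'def
  have hF'ne : F'.Nonempty := by
    rcases Finset.eq_empty_or_nonempty F' with h | h
    · rw [h, Finset.sum_empty] at hF; exact absurd hF (not_lt.2 hc0)
    · exact h
  obtain ⟨m, hmM, hmax⟩ := (F'.image e).exists_maximal (hF'ne.image e)
  obtain ⟨n₁, hn₁, hen₁⟩ := Finset.mem_image.1 hmM
  have hmx : m < x := hen₁ ▸ (Finset.mem_filter.1 hn₁).2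
  unfold SuccRank at hx
  push_neg at hx
  obtain ⟨z, hzx, hzm⟩ := hx m hmx
  have hmz : m < z := by
    rcases hdl x m z (le_of_lt hmx) (le_of_lt hzx) with h | h
    · exact lt_of_le_of_ne h (fun hc => hzm (hc ▸ le_refl _))
    · exact absurd h hzm
  refine ⟨z, hzx, lt_of_lt_of_le hF ?_⟩
  have hsum : ∑ n ∈ F', ((1:ℝ)/2)^(n+1)
      = ∑ n ∈ F', (if e n < z then ((1:ℝ)/2)^(n+1) else 0) := by
    refine Finset.sum_congr rfl (fun n hn => ?_)
    have henx : e n < x := (Finset.mem_filter.1 hn).2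
    have : e n ≤ m := by
      rcases hdl x (e n) m (le_of_lt henx) (le_of_lt hmx) with h | h
      · exact h
      · rcases lt_or_eq_of_le h with h2 | h2
        · exact absurd h2 (fun h3 => lt_irrefl _ (lt_of_lt_of_le h3 (hmax (Finset.mem_image_of_mem e hn) h3.le)))
        · exact h2 ▸ le_refl _
    rw [if_pos (lt_of_le_of_lt this hmz)]
  rw [hsum]
  exact Summable.sum_le_tsum F' (fun n _ => roadPhi_term_nonneg e z n) (roadPhi_summable e z)

lemma road_le_iff (p q : Road T) :
    p ≤ q ↔ ((ofLex p.val).1 < (ofLex q.val).1 ∨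
      ((ofLex p.val).1 = (ofLex q.val).1 ∧ ((ofLex p.val).2 : ℝ) ≤ ((ofLex q.val).2 : ℝ))) := by
  constructor
  · intro h
    rcases (Prod.Lex.le_iff (x := p.val) (y := q.val)).1 h with h | ⟨h1, h2⟩
    · exact Or.inl h
    · exact Or.inr ⟨h1, Subtype.coe_le_coe.2 h2⟩
  · intro h
    rcases h with h | ⟨h1, h2⟩
    · exact Prod.Lex.le_iff.2 (Or.inl h)
    · exact Prod.Lex.le_iff.2 (Or.inr ⟨h1, Subtype.coe_le_coe.1 h2⟩)

end RoadAux

/-- The road space of a Hausdorff well-stratified tree with no uncountable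
branches is a branchwise-real tree order. -/
theorem road_space_isBRTO (T : Type*) [PartialOrder T]
    (hT : IsWSTree T)
    (hH : ∀ x y : T, ∃ m : T, IsGLB {x, y} m)
    (hcb : ∀ B : Set T, IsMaxChain (· ≤ ·) B → B.Countable) :
    IsBRTO (Road T) := by
  classical
  obtain ⟨⟨r, hrt⟩, hdl, hwf⟩ := hT
  have key : ∀ p q : Road T,
      ((ofLex p.val).1 ≤ (ofLex q.val).1 ∨ (ofLex q.val).1 ≤ (ofLex p.val).1) →
      p ≤ q ∨ q ≤ p := by
    intro p q h
    rcases eq_or_ne (ofLex p.val).1 (ofLex q.val).1 with he | hne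
    · rcases le_total ((ofLex p.val).2 : ℝ) ((ofLex q.val).2 : ℝ) with h2 | h2
      · exact Or.inl ((road_le_iff _ _).2 (Or.inr ⟨he, h2⟩))
      · exact Or.inr ((road_le_iff _ _).2 (Or.inr ⟨he.symm, h2⟩))
    · rcases h with h | h
      · exact Or.inl ((road_le_iff _ _).2 (Or.inl (h.lt_of_ne hne)))
      · exact Or.inr ((road_le_iff _ _).2 (Or.inl (h.lt_of_ne hne.symm)))
  set rt : Road T := ⟨toLex (r, ⟨1, by norm_num⟩), Or.inl rfl⟩ with hrtdef
  have hrle : ∀ p : Road T, rt ≤ p := by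
    intro p
    rcases eq_or_ne r (ofLex p.val).1 with he | hne
    · refine (road_le_iff _ _).2 (Or.inr ⟨he, ?_⟩)
      rcases p.2 with h | h
      · rw [h]; exact le_of_eq rfl
      · exfalso
        obtain ⟨y, hy, -⟩ := h
        rw [← he] at hy
        exact absurd (hrt y) (not_le_of_gt hy)
    · exact (road_le_iff _ _).2 (Or.inl ((hrt _).lt_of_ne hne))
  refine ⟨⟨rt, hrle⟩, ?_, ?_, ?_⟩
  · -- DownLinear
    intro p q z hq hz
    have h1 : (ofLex q.val).1 ≤ (ofLex p.val).1 := by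
      rcases (road_le_iff q p).1 hq with h | ⟨h, -⟩
      · exact le_of_lt h
      · exact le_of_eq h
    have h2 : (ofLex z.val).1 ≤ (ofLex p.val).1 := by
      rcases (road_le_iff z p).1 hz with h | ⟨h, -⟩
      · exact le_of_lt h
      · exact le_of_eq h
    exact key q z (hdl _ _ _ h1 h2)
  · -- branches
    intro B hB
    have hmem : ∀ p : Road T, (∀ q ∈ B, p ≤ q ∨ q ≤ p) → p ∈ B := by
      intro p hp
      have := hB.2 (hB.1.insert (fun q hq _ => hp q hq)) (Set.subset_insert p B)
      rw [this]
      exact Set.mem_insert p B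
    have hBr : rt ∈ B := hmem rt (fun q _ => Or.inl (hrle q))
    set C : Set T := (fun p : Road T => (ofLex p.val).1) '' B with hCdef
    have hCchain : ∀ x ∈ C, ∀ y ∈ C, x ≤ y ∨ y ≤ x := by
      rintro x ⟨p, hp, rfl⟩ y ⟨q, hq, rfl⟩
      rcases eq_or_ne p q with rfl | hne
      · exact Or.inl le_rfl
      rcases hB.1 hp hq hne with h | h
      · rcases (road_le_iff _ _).1 h with h | ⟨h, -⟩
        · exact Or.inl (le_of_lt h)
        · exact Or.inl (le_of_eq h)
      · rcases (road_le_iff _ _).1 h with h | ⟨h, -⟩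
        · exact Or.inr (le_of_lt h)
        · exact Or.inr (le_of_eq h)
    have hfiber : ∀ x ∈ C, ∀ (t : Set.Ioc (0:ℝ) 1) (h : (t : ℝ) = 1 ∨ SuccRank x),
        (⟨toLex (x, t), h⟩ : Road T) ∈ B := by
      intro x hx t h
      refine hmem _ (fun q hq => key _ _ ?_)
      exact hCchain x hx _ ⟨q, hq, rfl⟩
    have hdc : ∀ x ∈ C, ∀ y, y ≤ x → y ∈ C := by
      intro x hx y hyx
      have hyB : (⟨toLex (y, ⟨1, by norm_num⟩), Or.inl rfl⟩ : Road T) ∈ B := by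
        refine hmem _ (fun q hq => key _ _ ?_)
        rcases hCchain _ ⟨q, hq, rfl⟩ x hx with h | h
        · rcases hdl x y _ hyx h with h2 | h2
          · exact Or.inl h2
          · exact Or.inr h2
        · exact Or.inl (le_trans hyx h)
      exact ⟨_, hyB, rfl⟩
    have hCcnt : C.Countable := by
      refine hcb C ⟨fun x hx y hy hne => hCchain x hx y hy, ?_⟩
      intro C' hC' hsub
      refine Set.Subset.antisymm hsub (fun z hz => ?_)
      have hzB : (⟨toLex (z, ⟨1, by norm_num⟩), Or.inl rfl⟩ : Road T) ∈ B := by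
        refine hmem _ (fun q hq => key _ _ ?_)
        rcases eq_or_ne z (ofLex q.val).1 with he | hne
        · exact Or.inl (le_of_eq he)
        · exact hC' hz (hsub ⟨q, hq, rfl⟩) hne
      exact ⟨_, hzB, rfl⟩
    have hrC : r ∈ C := ⟨rt, hBr, rfl⟩
    obtain ⟨e0, he0⟩ := (Set.countable_iff_exists_surjective ⟨r, hrC⟩).1 hCcnt
    set e : ℕ → T := fun n => (e0 n : T) with hedef
    have hee : ∀ x ∈ C, ∃ n, e n = x := by
      intro x hx
      obtain ⟨n, hn⟩ := he0 ⟨x, hx⟩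
      exact ⟨n, congrArg Subtype.val hn⟩
    set g : T → ℝ → ℝ := fun x s =>
      if h : SuccRank x then
        roadPhi e h.choose + s * (roadPhi e x - roadPhi e h.choose)
      else roadPhi e x with hgdef
    have hg_pos : ∀ (x : T) (s : ℝ) (h : SuccRank x),
        g x s = roadPhi e h.choose + s * (roadPhi e x - roadPhi e h.choose) :=
      fun x s h => dif_pos h
    have hg_neg : ∀ (x : T) (s : ℝ), ¬ SuccRank x → g x s = roadPhi e x :=
      fun x s h => dif_neg h
    have hg_one : ∀ x : T, g x 1 = roadPhi e x := by
      intro x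
      by_cases h : SuccRank x
      · rw [hg_pos x 1 h]; ring
      · exact hg_neg x 1 h
    have hd_pos : ∀ (x : T), x ∈ C → ∀ (h : SuccRank x),
        0 < roadPhi e x - roadPhi e h.choose := by
      intro x hx h
      have hch := h.choose_spec
      obtain ⟨n, hn⟩ := hee h.choose (hdc x hx _ (le_of_lt hch.1))
      have := roadPhi_strict e hch.1 hn
      linarith
    have hg_le : ∀ (x : T), x ∈ C → ∀ s : ℝ, s ≤ 1 → g x s ≤ roadPhi e x := by
      intro x hx s hs
      by_cases h : SuccRank x
      · rw [hg_pos x s h]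
        have hd := hd_pos x hx h
        nlinarith
      · rw [hg_neg x s h]
    have hg_gt : ∀ (x : T), x ∈ C → ∀ (h : SuccRank x), ∀ s : ℝ, 0 < s →
        ∀ y, y < x → roadPhi e y < g x s := by
      intro x hx h s hs y hy
      have hch := h.choose_spec
      have h1 : roadPhi e y ≤ roadPhi e h.choose := roadPhi_mono e (hch.2 y hy)
      have hd := hd_pos x hx h
      rw [hg_pos x s h]
      nlinarith
    have hg_nonneg : ∀ (x : T), x ∈ C → ∀ s : ℝ, 0 ≤ s → 0 ≤ g x s := by
      intro x hx s hs
      by_cases h : SuccRank x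
      · rw [hg_pos x s h]
        have hd := hd_pos x hx h
        have := roadPhi_nonneg e h.choose
        nlinarith
      · rw [hg_neg x s h]
        exact roadPhi_nonneg e x
    set f : Road T → ℝ := fun p => g (ofLex p.val).1 ((ofLex p.val).2 : ℝ) with hfdef
    have hfC : ∀ p ∈ B, (ofLex p.val).1 ∈ C := fun p hp => ⟨p, hp, rfl⟩
    have hf_le : ∀ p ∈ B, f p ≤ roadPhi e (ofLex p.val).1 :=
      fun p hp => hg_le _ (hfC p hp) _ (ofLex p.val).2.2.2
    have hf_nonneg : ∀ p ∈ B, 0 ≤ f p :=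
      fun p hp => hg_nonneg _ (hfC p hp) _ (le_of_lt (ofLex p.val).2.2.1)
    have hmono : ∀ p ∈ B, ∀ q ∈ B, p < q → f p < f q := by
      intro p hp q hq hpq
      obtain ⟨⟨x, s⟩, hp'⟩ := p
      obtain ⟨⟨y, t⟩, hq'⟩ := q
      have hxC : x ∈ C := hfC _ hp
      have hyC : y ∈ C := hfC _ hq
      rcases (road_le_iff _ _).1 (le_of_lt hpq) with hxy | ⟨hxy, hst⟩
      · -- x < y
        have h1 : g x (s : ℝ) ≤ roadPhi e x := hg_le x hxC _ s.2.2
        have h2 : roadPhi e x < g y (t : ℝ) := by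
          by_cases h : SuccRank y
          · exact hg_gt y hyC h _ t.2.1 x hxy
          · rw [hg_neg y _ h]
            obtain ⟨n, hn⟩ := hee x hxC
            exact roadPhi_strict e hxy hn
        show g x (s : ℝ) < g y (t : ℝ)
        linarith
      · -- x = y, s < t
        have hxy' : x = y := hxy
        subst hxy'
        have hst' : (s : ℝ) < (t : ℝ) := by
          rcases lt_or_eq_of_le hst with h | h
          · exact h
          · exfalso
            apply ne_of_lt hpq
            have : s = t := Subtype.ext h
            subst this
            rfl
        have hsucc : SuccRank x := by
          rcases hp' with h1 | h1
          · exfalso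
            have hs1 : (s : ℝ) = 1 := h1
            have := t.2.2
            linarith
          · exact h1
        show g x (s : ℝ) < g x (t : ℝ)
        rw [hg_pos x _ hsucc, hg_pos x _ hsucc]
        have hd := hd_pos x hxC hsucc
        nlinarith
    have hinj : Set.InjOn f B := by
      intro p hp q hq hfe
      by_contra hne
      rcases hB.1 hp hq hne with h | h
      · exact absurd hfe (ne_of_lt (hmono p hp q hq (lt_of_le_of_ne h hne)))
      · exact absurd hfe.symm (ne_of_lt (hmono q hq p hp (lt_of_le_of_ne h (Ne.symm hne))))
    refine ⟨f '' B, ⟨?_⟩, ?_⟩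
    · -- OrdConnected
      rintro c1 ⟨p, hp, rfl⟩ c2 ⟨q, hq, rfl⟩ c hc
      obtain ⟨hcp, hcq⟩ := hc
      have hc0 : 0 ≤ c := le_trans (hf_nonneg p hp) hcp
      set S : Set T := {z ∈ C | c ≤ roadPhi e z} with hSdef
      have hqS : (ofLex q.val).1 ∈ S := ⟨hfC q hq, le_trans hcq (hf_le q hq)⟩
      obtain ⟨w, hwS, hleast⟩ := road_exists_least hwf
        (fun y hy z hz => hCchain y hy.1 z hz.1) ⟨_, hqS⟩
      by_cases heq : roadPhi e w ≤ c
      · have hcw : c = roadPhi e w := le_antisymm hwS.2 heq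
        refine ⟨⟨toLex (w, ⟨1, by norm_num⟩), Or.inl rfl⟩,
          hfiber w hwS.1 _ _, ?_⟩
        show g w ((1 : ℝ)) = c
        rw [hg_one, hcw]
      · have hcw : c < roadPhi e w := not_le.1 heq
        have hsw : SuccRank w := by
          by_contra hns
          by_cases hbot : ∃ y, y < w
          · obtain ⟨z, hzw, hcz⟩ := roadPhi_limit hdl e hns hc0 hcw
            have hzC : z ∈ C := hdc w hwS.1 z (le_of_lt hzw)
            exact absurd (hleast z ⟨hzC, le_of_lt hcz⟩) (not_le_of_gt hzw)
          · push_neg at hbot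
            rw [roadPhi_bot e hbot] at hcw
            linarith
        have hch := hsw.choose_spec
        have hpdC : hsw.choose ∈ C := hdc w hwS.1 _ (le_of_lt hch.1)
        have hpdlt : roadPhi e hsw.choose < c := by
          by_contra h
          exact absurd (hleast _ ⟨hpdC, not_lt.1 h⟩) (not_le_of_gt hch.1)
        set d : ℝ := roadPhi e w - roadPhi e hsw.choose with hddef
        have hd : 0 < d := hd_pos w hwS.1 hsw
        set t : ℝ := (c - roadPhi e hsw.choose) / d with htdef
        have ht0 : 0 < t := div_pos (by linarith) hd
        have ht1 : t ≤ 1 := by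
          rw [div_le_one hd]
          linarith
        refine ⟨⟨toLex (w, ⟨t, ht0, ht1⟩), Or.inr hsw⟩,
          hfiber w hwS.1 _ _, ?_⟩
        show g w t = c
        rw [hg_pos w t hsw, htdef, ← hddef, div_mul_cancel₀ _ (ne_of_gt hd)]
        ring
    · -- order iso
      refine ⟨{ toEquiv := Equiv.Set.imageOfInjOn f B hinj, map_rel_iff' := ?_ }⟩
      intro a b
      constructor
      · intro h
        have hfab : f (a : Road T) ≤ f (b : Road T) := h
        by_contra hab
        have hne : (a : Road T) ≠ (b : Road T) := by
          intro hc
          exact hab (le_of_eq (Subtype.ext hc))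
        rcases hB.1 a.2 b.2 hne with h1 | h1
        · exact hab h1
        · exact absurd hfab (not_le_of_gt (hmono _ b.2 _ a.2 (lt_of_le_of_ne h1 (Ne.symm hne))))
      · intro h
        show f (a : Road T) ≤ f (b : Road T)
        rcases lt_or_eq_of_le h with h1 | h1
        · exact le_of_lt (hmono _ a.2 _ b.2 h1)
        · exact le_of_eq (congrArg f (congrArg Subtype.val h1))
  · -- meets
    have hglb : ∀ (u v w : Road T), w ≤ u → w ≤ v →
        (∀ z : Road T, z ≤ u → z ≤ v → z ≤ w) → IsGLB {u, v} w := by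
      intro u v w h1 h2 h3
      refine ⟨fun z hz => ?_,
        fun z hz => h3 z (hz (Set.mem_insert _ _)) (hz (Set.mem_insert_of_mem _ rfl))⟩
      rcases Set.mem_insert_iff.1 hz with rfl | hz
      · exact h1
      · rw [Set.mem_singleton_iff] at hz
        exact hz ▸ h2
    intro a b
    obtain ⟨⟨x, s⟩, ha⟩ := a
    obtain ⟨⟨y, t⟩, hb⟩ := b
    by_cases hxy : x = y
    · subst hxy
      rcases le_total s t with hst | hst
      · exact ⟨_, hglb _ _ ⟨toLex (x, s), ha⟩ le_rfl
          ((road_le_iff _ _).2 (Or.inr ⟨rfl, Subtype.coe_le_coe.2 hst⟩)) (fun z h1 _ => h1)⟩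
      · exact ⟨_, hglb _ _ ⟨toLex (x, t), hb⟩
          ((road_le_iff _ _).2 (Or.inr ⟨rfl, Subtype.coe_le_coe.2 hst⟩)) le_rfl (fun z _ h2 => h2)⟩
    · obtain ⟨m, hm⟩ := hH x y
      have hmx : m ≤ x := hm.1 (Set.mem_insert _ _)
      have hmy : m ≤ y := hm.1 (Set.mem_insert_of_mem _ rfl)
      by_cases hmx' : m = x
      · have hxy' : x < y := lt_of_le_of_ne (hmx' ▸ hmy) hxy
        exact ⟨_, hglb _ _ ⟨toLex (x, s), ha⟩ le_rfl
          ((road_le_iff _ _).2 (Or.inl hxy')) (fun z h1 _ => h1)⟩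
      by_cases hmy' : m = y
      · have hyx' : y < x := lt_of_le_of_ne (hmy' ▸ hmx) (Ne.symm hxy)
        exact ⟨_, hglb _ _ ⟨toLex (y, t), hb⟩
          ((road_le_iff _ _).2 (Or.inl hyx')) le_rfl (fun z _ h2 => h2)⟩
      · have h1 : m < x := lt_of_le_of_ne hmx hmx'
        have h2 : m < y := lt_of_le_of_ne hmy hmy'
        refine ⟨⟨toLex (m, ⟨1, by norm_num⟩), Or.inl rfl⟩, hglb _ _ _
          ((road_le_iff _ _).2 (Or.inl h1)) ((road_le_iff _ _).2 (Or.inl h2)) ?_⟩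
        intro z hza hzb
        have hz1 : (ofLex z.val).1 ≤ x := by
          rcases (road_le_iff _ _).1 hza with h | ⟨h, -⟩
          · exact le_of_lt h
          · exact le_of_eq h
        have hz2 : (ofLex z.val).1 ≤ y := by
          rcases (road_le_iff _ _).1 hzb with h | ⟨h, -⟩
          · exact le_of_lt h
          · exact le_of_eq h
        have hzm : (ofLex z.val).1 ≤ m := hm.2 (by
          intro w hw
          rcases Set.mem_insert_iff.1 hw with rfl | hw
          · exact hz1
          · rw [Set.mem_singleton_iff] at hw
            exact hw ▸ hz2)
        rcases lt_or_eq_of_le hzm with h | h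
        · exact (road_le_iff _ _).2 (Or.inl h)
        · exact (road_le_iff _ _).2 (Or.inr ⟨h, (ofLex z.val).2.2.2⟩)
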